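/- Variance reduction with the same total sample size (RL setting): for every k, t ∈ {0,…,T−1}, and s ∈ 𝒮, if for all k, t, s: sqrt(η̄_t/η̲_t) (Σ_a π^(k)_t(a|s) sqrt(ĥq_{π^(k),t}(s,a)))² − (1 − n_k/n) Δ^(k)_t(s) ≤ Σ_a π^(k)_t(a|s) ĥq_{π^(k),t}(s,a), where Δ^(k)_t(s) = E_{A~ĥμ_t(·|s)}[(ρ^{π^(k),ĥμ}_t)² ν_{π^(k),t}(s,A)] + V_{A~ĥμ_t(·|s)}(ρ^{π^(k),ĥμ}_t q_{π^(k),t}(s,A)), then V(E^{off,π^(k)}_{t:T−1} | S_t = s) ≤ V(E^{on,π^(k)}_{t:T−1} | S_t = s), i.e., (1/n) V(G^PDIS_k(τ^{ĥμ_{t:T−1}}_{t:T−1}) | S_t = s) ≤ (1/n_k) V(G^PDIS_k(τ^{π^(k)_{t:T−1}}_{t:T−1}) | S_t = s). -/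

import Mathlib

open Finset

section RL

variable {S A : Type*}

/-- Expectation, over the random trajectory of length `h` generated from time `t` and state `s`
by the behavior policy `μ` in the MDP with transition kernel `p`, of a functional `f` of the
trajectory (recorded as the list of successive (action, next-state) pairs).  This is the finite
sum over all trajectories weighted by their probabilities; trajectories of zero probability
contribute `0`. -/
noncomputable def Etraj [Fintype S] [Fintype A] (p : S → A → S → ℝ)
    (μ : ℕ → S → A → ℝ) : ℕ → ℕ → S → (List (A × S) → ℝ) → ℝ
  | 0, _, _, f => f []
  | h + 1, t, s, f =>
      ∑ a : A, ∑ s' : S,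
        μ t s a * p s a s' * Etraj p μ h (t + 1) s' (fun l => f ((a, s') :: l))

/-- Total (undiscounted) reward `Σ_i R_{i+1}` along a trajectory starting from state `s`. -/
noncomputable def retF (r : S → A → ℝ) : S → List (A × S) → ℝ
  | _, [] => 0
  | s, (a, s') :: l => r s a + retF r s' l

/-- The PDIS return `G^PDIS(τ^{μ_{t:T-1}}_{t:T-1}) = Σ_i (∏_{j=t}^i ρ^{π,μ}_j) R_{i+1}` of a
trajectory starting at time `t` in state `s`, with target policy `π` and behavior policy `μ`,
in its recursive form. -/
noncomputable def pdisF (r : S → A → ℝ) (π μ : ℕ → S → A → ℝ) :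
    ℕ → S → List (A × S) → ℝ
  | _, _, [] => 0
  | t, s, (a, s') :: l => π t s a / μ t s a * (r s a + pdisF r π μ (t + 1) s' l)

/-- State value function `v_{π,t}(s) = E_π[Σ_{i=t+1}^T R_i | S_t = s]` for horizon `T`. -/
noncomputable def vval [Fintype S] [Fintype A] (p : S → A → S → ℝ) (r : S → A → ℝ)
    (π : ℕ → S → A → ℝ) (T t : ℕ) (s : S) : ℝ :=
  Etraj p π (T - t) t s (retF r s)

/-- Action value function `q_{π,t}(s,a) = E_π[Σ_{i=t+1}^T R_i | S_t = s, A_t = a]`. -/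
noncomputable def qval [Fintype S] [Fintype A] (p : S → A → S → ℝ) (r : S → A → ℝ)
    (π : ℕ → S → A → ℝ) (T t : ℕ) (s : S) (a : A) : ℝ :=
  r s a + ∑ s' : S, p s a s' * vval p r π T (t + 1) s'

/-- Conditional expectation `E[G^PDIS(τ^{μ_{t:T-1}}_{t:T-1}) | S_t = s]`. -/
noncomputable def Epdis [Fintype S] [Fintype A] (p : S → A → S → ℝ) (r : S → A → ℝ)
    (π μ : ℕ → S → A → ℝ) (T t : ℕ) (s : S) : ℝ :=
  Etraj p μ (T - t) t s (pdisF r π μ t s)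

/-- Conditional variance `V(G^PDIS(τ^{μ_{t:T-1}}_{t:T-1}) | S_t = s)`. -/
noncomputable def Vpdis [Fintype S] [Fintype A] (p : S → A → S → ℝ) (r : S → A → ℝ)
    (π μ : ℕ → S → A → ℝ) (T t : ℕ) (s : S) : ℝ :=
  Etraj p μ (T - t) t s (fun l => pdisF r π μ t s l ^ 2) - Epdis p r π μ T t s ^ 2

/-- `ν_{π,t}(s,a) = V_{S'~p(·|s,a)}(v_{π,t+1}(S'))` for `t ≤ T-2`, and `ν_{π,T-1}(s,a) = 0`. -/
noncomputable def nuval [Fintype S] [Fintype A] (p : S → A → S → ℝ) (r : S → A → ℝ)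
    (π : ℕ → S → A → ℝ) (T t : ℕ) (s : S) (a : A) : ℝ :=
  if t = T - 1 then 0
  else (∑ s' : S, p s a s' * vval p r π T (t + 1) s' ^ 2)
       - (∑ s' : S, p s a s' * vval p r π T (t + 1) s') ^ 2

/-- The variance-augmented action value `ĥq_{π,t}(s,a)`:
`ĥq_{π,T-1}(s,a) = q_{π,T-1}(s,a)²` and, for `t ≤ T-2`,
`ĥq_{π,t}(s,a) = q_{π,t}(s,a)² + ν_{π,t}(s,a) + Σ_{s'} p(s'|s,a) V(G^PDIS(τ^{π_{t+1:T-1}}) | S_{t+1}=s')`. -/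
noncomputable def hq [Fintype S] [Fintype A] (p : S → A → S → ℝ) (r : S → A → ℝ)
    (π : ℕ → S → A → ℝ) (T t : ℕ) (s : S) (a : A) : ℝ :=
  if t = T - 1 then qval p r π T t s a ^ 2
  else qval p r π T t s a ^ 2 + nuval p r π T t s a
       + ∑ s' : S, p s a s' * Vpdis p r π π T (t + 1) s'

/-- The tailored behavior policy `ĥμ_t(a|s) ∝ sqrt(Σ_k π^(k)_t(a|s)² ĥq_{π^(k),t}(s,a))`,
normalized over `a ∈ 𝒜` (uniform on `𝒜` if all the weights vanish). -/
noncomputable def hmu [Fintype S] [Fintype A] (p : S → A → S → ℝ) (r : S → A → ℝ)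
    (K : ℕ) (π : Fin K → ℕ → S → A → ℝ) (T t : ℕ) (s : S) (a : A) : ℝ :=
  if (∑ b : A, Real.sqrt (∑ k : Fin K, π k t s b ^ 2 * hq p r (π k) T t s b)) = 0 then
    (Fintype.card A : ℝ)⁻¹
  else
    Real.sqrt (∑ k : Fin K, π k t s a ^ 2 * hq p r (π k) T t s a) /
      ∑ b : A, Real.sqrt (∑ k : Fin K, π k t s b ^ 2 * hq p r (π k) T t s b)

/-- `w^(k)_t(s,a) = π^(k)_t(a|s)² ĥq_{π^(k),t}(s,a)`. -/
noncomputable def wRL [Fintype S] [Fintype A] (p : S → A → S → ℝ) (r : S → A → ℝ)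
    (K : ℕ) (π : Fin K → ℕ → S → A → ℝ) (T : ℕ) (k : Fin K) (t : ℕ) (s : S) (a : A) : ℝ :=
  π k t s a ^ 2 * hq p r (π k) T t s a

/-- `η^(k)_t(s,a) = w^(k)_t(s,a) / w̄_t(s,a)` with `w̄_t(s,a) = (1/K) Σ_j w^(j)_t(s,a)`. -/
noncomputable def etaRL [Fintype S] [Fintype A] (p : S → A → S → ℝ) (r : S → A → ℝ)
    (K : ℕ) (π : Fin K → ℕ → S → A → ℝ) (T : ℕ) (k : Fin K) (t : ℕ) (s : S) (a : A) : ℝ :=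
  wRL p r K π T k t s a / ((∑ j : Fin K, wRL p r K π T j t s a) / K)

/-- `η̲_t = min_{k,s,a} η^(k)_t(s,a)`. -/
noncomputable def etaLoRL [Fintype S] [Fintype A] (p : S → A → S → ℝ) (r : S → A → ℝ)
    (K : ℕ) (π : Fin K → ℕ → S → A → ℝ) (T t : ℕ) : ℝ :=
  ⨅ x : Fin K × S × A, etaRL p r K π T x.1 t x.2.1 x.2.2

/-- `η̄_t = max_{k,s,a} η^(k)_t(s,a)`. -/
noncomputable def etaHiRL [Fintype S] [Fintype A] (p : S → A → S → ℝ) (r : S → A → ℝ)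
    (K : ℕ) (π : Fin K → ℕ → S → A → ℝ) (T t : ℕ) : ℝ :=
  ⨆ x : Fin K × S × A, etaRL p r K π T x.1 t x.2.1 x.2.2

end RL

/-- `Δ^(k)_t(s) = E_{A~ĥμ_t(·|s)}[(ρ^{π^(k),ĥμ}_t)² ν_{π^(k),t}(s,A)]
  + V_{A~ĥμ_t(·|s)}(ρ^{π^(k),ĥμ}_t q_{π^(k),t}(s,A))`. -/
noncomputable def DeltaRL {S A : Type*} [Fintype S] [Fintype A]
    (p : S → A → S → ℝ) (r : S → A → ℝ)
    (K : ℕ) (π : Fin K → ℕ → S → A → ℝ) (T : ℕ) (k : Fin K) (t : ℕ) (s : S) : ℝ :=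
  (∑ a : A, hmu p r K π T t s a *
      ((π k t s a / hmu p r K π T t s a) ^ 2 * nuval p r (π k) T t s a))
  + ((∑ a : A, hmu p r K π T t s a *
        (π k t s a / hmu p r K π T t s a * qval p r (π k) T t s a) ^ 2)
     - (∑ a : A, hmu p r K π T t s a *
        (π k t s a / hmu p r K π T t s a * qval p r (π k) T t s a)) ^ 2)

section Aux
variable {S A : Type*} [Fintype S] [Fintype A]
variable (p : S → A → S → ℝ) (r : S → A → ℝ)

lemma Etraj_add (μ : ℕ → S → A → ℝ) :
    ∀ (h t : ℕ) (s : S) (f g : List (A × S) → ℝ),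
      Etraj p μ h t s (fun l => f l + g l) = Etraj p μ h t s f + Etraj p μ h t s g := by
  intro h
  induction h with
  | zero => intro t s f g; simp [Etraj]
  | succ h ih =>
      intro t s f g
      simp only [Etraj, ih]
      rw [← Finset.sum_add_distrib]
      refine Finset.sum_congr rfl fun a _ => ?_
      rw [← Finset.sum_add_distrib]
      refine Finset.sum_congr rfl fun s' _ => ?_
      ring

lemma Etraj_smul (μ : ℕ → S → A → ℝ) :
    ∀ (h t : ℕ) (s : S) (c : ℝ) (f : List (A × S) → ℝ),
      Etraj p μ h t s (fun l => c * f l) = c * Etraj p μ h t s f := by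
  intro h
  induction h with
  | zero => intro t s c f; simp [Etraj]
  | succ h ih =>
      intro t s c f
      simp only [Etraj, ih]
      rw [Finset.mul_sum]
      refine Finset.sum_congr rfl fun a _ => ?_
      rw [Finset.mul_sum]
      refine Finset.sum_congr rfl fun s' _ => ?_
      ring

/-- a policy is a pmf at all times `< T` -/
def IsPmf (μ : ℕ → S → A → ℝ) (T : ℕ) : Prop :=
  ∀ i (s : S), i < T → (∀ a, 0 ≤ μ i s a) ∧ (∑ a : A, μ i s a = 1)

lemma Etraj_const (hp1 : ∀ s a, ∑ s' : S, p s a s' = 1)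
    (μ : ℕ → S → A → ℝ) {T : ℕ} (hμ : IsPmf μ T) :
    ∀ (h t : ℕ), t + h ≤ T → ∀ (s : S) (c : ℝ),
      Etraj p μ h t s (fun _ => c) = c := by
  intro h
  induction h with
  | zero => intro t _ s c; simp [Etraj]
  | succ h ih =>
      intro t ht s c
      have ht' : t < T := by omega
      simp only [Etraj]
      have : ∀ a : A, ∀ s' : S, Etraj p μ h (t+1) s' (fun _ => c) = c := fun a s' =>
        ih (t+1) (by omega) s' c
      calc ∑ a : A, ∑ s' : S, μ t s a * p s a s' * Etraj p μ h (t+1) s' (fun _ => c)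
          = ∑ a : A, ∑ s' : S, μ t s a * p s a s' * c := by
            refine Finset.sum_congr rfl fun a _ => Finset.sum_congr rfl fun s' _ => ?_
            rw [this a s']
        _ = ∑ a : A, μ t s a * c := by
            refine Finset.sum_congr rfl fun a _ => ?_
            rw [← Finset.sum_mul, ← Finset.mul_sum, hp1]; ring
        _ = c := by rw [← Finset.sum_mul, (hμ t s ht').2, one_mul]

lemma Etraj_mono (hp0 : ∀ s a s', 0 ≤ p s a s')
    (μ : ℕ → S → A → ℝ) {T : ℕ} (hμ : IsPmf μ T) :
    ∀ (h t : ℕ), t + h ≤ T → ∀ (s : S) (f g : List (A × S) → ℝ),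
      (∀ l, f l ≤ g l) → Etraj p μ h t s f ≤ Etraj p μ h t s g := by
  intro h
  induction h with
  | zero => intro t _ s f g hfg; exact hfg []
  | succ h ih =>
      intro t ht s f g hfg
      have ht' : t < T := by omega
      simp only [Etraj]
      refine Finset.sum_le_sum fun a _ => Finset.sum_le_sum fun s' _ => ?_
      have hw : 0 ≤ μ t s a * p s a s' :=
        mul_nonneg ((hμ t s ht').1 a) (hp0 s a s')
      exact mul_le_mul_of_nonneg_left
        (ih (t+1) (by omega) s' _ _ (fun l => hfg ((a, s') :: l))) hw

lemma Etraj_nonneg (hp0 : ∀ s a s', 0 ≤ p s a s') (hp1 : ∀ s a, ∑ s' : S, p s a s' = 1)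
    (μ : ℕ → S → A → ℝ) {T : ℕ} (hμ : IsPmf μ T)
    (h t : ℕ) (ht : t + h ≤ T) (s : S) (f : List (A × S) → ℝ)
    (hf : ∀ l, 0 ≤ f l) : 0 ≤ Etraj p μ h t s f := by
  have := Etraj_mono p hp0 μ hμ h t ht s (fun _ => 0) f hf
  rwa [Etraj_const p hp1 μ hμ h t ht s 0] at this

end Aux
section Aux2
variable {S A : Type*} [Fintype S] [Fintype A]
variable (p : S → A → S → ℝ) (r : S → A → ℝ)

lemma weight_sum_one (hp1 : ∀ s a, ∑ s' : S, p s a s' = 1)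
    {μ : ℕ → S → A → ℝ} {T : ℕ} (hμ : IsPmf μ T) {t : ℕ} (ht : t < T) (s : S) :
    ∑ a : A, ∑ s' : S, μ t s a * p s a s' = 1 := by
  calc ∑ a : A, ∑ s' : S, μ t s a * p s a s'
      = ∑ a : A, μ t s a := by
        refine Finset.sum_congr rfl fun a _ => ?_
        rw [← Finset.mul_sum, hp1, mul_one]
    _ = 1 := (hμ t s ht).2

lemma Etraj_sq (hp0 : ∀ s a s', 0 ≤ p s a s') (hp1 : ∀ s a, ∑ s' : S, p s a s' = 1)
    (μ : ℕ → S → A → ℝ) {T : ℕ} (hμ : IsPmf μ T) :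
    ∀ (h t : ℕ), t + h ≤ T → ∀ (s : S) (f : List (A × S) → ℝ),
      Etraj p μ h t s f ^ 2 ≤ Etraj p μ h t s (fun l => f l ^ 2) := by
  intro h
  induction h with
  | zero => intro t _ s f; simp [Etraj]
  | succ h ih =>
      intro t ht s f
      have ht' : t < T := by omega
      simp only [Etraj]
      set w : A × S → ℝ := fun x => μ t s x.1 * p s x.1 x.2 with hw
      set E : A × S → ℝ := fun x => Etraj p μ h (t+1) x.2 (fun l => f ((x.1, x.2) :: l)) with hE
      have hwnn : ∀ x : A × S, 0 ≤ w x := fun x =>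
        mul_nonneg ((hμ t s ht').1 x.1) (hp0 s x.1 x.2)
      have hws : ∑ x : A × S, w x = 1 := by
        rw [Fintype.sum_prod_type]; exact weight_sum_one p hp1 hμ ht' s
      have h1 : (∑ a : A, ∑ s' : S, μ t s a * p s a s' * E (a, s'))
          = ∑ x : A × S, w x * E x := by rw [Fintype.sum_prod_type]
      have h2 : (∑ a : A, ∑ s' : S, μ t s a * p s a s' *
            Etraj p μ h (t+1) s' (fun l => f ((a, s') :: l) ^ 2))
          = ∑ x : A × S, w x * Etraj p μ h (t+1) x.2 (fun l => f ((x.1, x.2) :: l) ^ 2) := by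
        rw [Fintype.sum_prod_type]
      rw [h1, h2]
      have key : (∑ x : A × S, w x * E x) ^ 2 ≤ ∑ x : A × S, w x * E x ^ 2 := by
        have cs := Finset.sum_mul_sq_le_sq_mul_sq Finset.univ
          (fun x : A × S => Real.sqrt (w x)) (fun x => Real.sqrt (w x) * E x)
        have e1 : ∀ x : A × S, Real.sqrt (w x) * (Real.sqrt (w x) * E x) = w x * E x := by
          intro x; rw [← mul_assoc, Real.mul_self_sqrt (hwnn x)]
        have e2 : ∀ x : A × S, Real.sqrt (w x) ^ 2 = w x := fun x => Real.sq_sqrt (hwnn x)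
        have e3 : ∀ x : A × S, (Real.sqrt (w x) * E x) ^ 2 = w x * E x ^ 2 := by
          intro x; rw [mul_pow, e2]
        simp only [e1, e3] at cs
        calc (∑ x : A × S, w x * E x) ^ 2
            ≤ (∑ x : A × S, Real.sqrt (w x) ^ 2) * ∑ x : A × S, w x * E x ^ 2 := cs
          _ = ∑ x : A × S, w x * E x ^ 2 := by
              simp only [e2]; rw [hws, one_mul]
      refine key.trans (Finset.sum_le_sum fun x _ => ?_)
      exact mul_le_mul_of_nonneg_left (ih (t+1) (by omega) x.2 _) (hwnn x)

end Aux2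
section Aux3
variable {S A : Type*} [Fintype S] [Fintype A]
variable (p : S → A → S → ℝ) (r : S → A → ℝ)

lemma pdis_mean (hp1 : ∀ s a, ∑ s' : S, p s a s' = 1)
    (π μ : ℕ → S → A → ℝ) {T : ℕ} (hπ : IsPmf π T) (hμ : IsPmf μ T)
    (hcancel : ∀ i (s : S) a, i < T → μ i s a * (π i s a / μ i s a) = π i s a) :
    ∀ (h t : ℕ), t + h ≤ T → ∀ (s : S),
      Etraj p μ h t s (pdisF r π μ t s) = Etraj p π h t s (retF r s) := by
  intro h
  induction h with
  | zero => intro t _ s; simp [Etraj, pdisF, retF]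
  | succ h ih =>
      intro t ht s
      simp only [Etraj]
      refine Finset.sum_congr rfl fun a _ => Finset.sum_congr rfl fun s' _ => ?_
      have hpd : ∀ l, pdisF r π μ t s ((a, s') :: l)
          = π t s a / μ t s a * (r s a + pdisF r π μ (t+1) s' l) := fun l => rfl
      have hre : ∀ l : List (A × S), retF r s ((a, s') :: l) = r s a + retF r s' l :=
        fun l => rfl
      simp only [hpd, hre]
      have e1 : Etraj p μ h (t+1) s'
            (fun l => π t s a / μ t s a * (r s a + pdisF r π μ (t+1) s' l))
          = π t s a / μ t s a * (r s a + Etraj p μ h (t+1) s' (pdisF r π μ (t+1) s')) := by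
        rw [Etraj_smul]
        congr 1
        have := Etraj_add p μ h (t+1) s' (fun _ => r s a) (pdisF r π μ (t+1) s')
        rw [this, Etraj_const p hp1 μ hμ h (t+1) (by omega) s' (r s a)]
      have e2 : Etraj p π h (t+1) s' (fun l => r s a + retF r s' l)
          = r s a + Etraj p π h (t+1) s' (retF r s') := by
        rw [Etraj_add p π h (t+1) s' (fun _ => r s a) (retF r s'),
          Etraj_const p hp1 π hπ h (t+1) (by omega) s' (r s a)]
      rw [e1, e2, ih (t+1) (by omega) s']
      have : μ t s a * p s a s' * (π t s a / μ t s a *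
            (r s a + Etraj p π h (t+1) s' (retF r s')))
          = (μ t s a * (π t s a / μ t s a)) * p s a s' *
            (r s a + Etraj p π h (t+1) s' (retF r s')) := by ring
      rw [this, hcancel t s a (by omega)]

lemma Epdis_eq_vval (hp1 : ∀ s a, ∑ s' : S, p s a s' = 1)
    (π μ : ℕ → S → A → ℝ) {T : ℕ} (hπ : IsPmf π T) (hμ : IsPmf μ T)
    (hcancel : ∀ i (s : S) a, i < T → μ i s a * (π i s a / μ i s a) = π i s a)
    (t : ℕ) (ht : t ≤ T) (s : S) :
    Epdis p r π μ T t s = vval p r π T t s := by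
  unfold Epdis vval
  exact pdis_mean p r hp1 π μ hπ hμ hcancel (T - t) t (by omega) s

lemma vval_succ_eq (π : ℕ → S → A → ℝ) {T : ℕ} (t : ℕ) (ht : t < T) (s' : S) :
    Etraj p π (T - t - 1) (t + 1) s' (retF r s') = vval p r π T (t+1) s' := by
  unfold vval
  congr 1

lemma vval_eq_sum_q (hp1 : ∀ s a, ∑ s' : S, p s a s' = 1)
    (π : ℕ → S → A → ℝ) {T : ℕ} (hπ : IsPmf π T)
    (t : ℕ) (ht : t < T) (s : S) :
    vval p r π T t s = ∑ a : A, π t s a * qval p r π T t s a := by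
  have hTt : T - t = (T - t - 1) + 1 := by omega
  unfold vval
  rw [hTt]
  simp only [Etraj]
  refine Finset.sum_congr rfl fun a _ => ?_
  have hre : ∀ s' : S, ∀ l : List (A × S), retF r s ((a, s') :: l) = r s a + retF r s' l :=
    fun s' l => rfl
  calc ∑ s' : S, π t s a * p s a s' *
        Etraj p π (T - t - 1) (t+1) s' (fun l => retF r s ((a, s') :: l))
      = ∑ s' : S, π t s a * p s a s' * (r s a + vval p r π T (t+1) s') := by
        refine Finset.sum_congr rfl fun s' _ => ?_
        congr 1
        simp only [hre]
        rw [Etraj_add p π (T - t - 1) (t+1) s' (fun _ => r s a) (retF r s'),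
          Etraj_const p hp1 π hπ (T - t - 1) (t+1) (by omega) s' (r s a),
          vval_succ_eq p r π t ht s']
    _ = π t s a * ∑ s' : S, p s a s' * (r s a + vval p r π T (t+1) s') := by
        rw [Finset.mul_sum]
        refine Finset.sum_congr rfl fun s' _ => by ring
    _ = π t s a * qval p r π T t s a := by
        unfold qval
        congr 1
        rw [Finset.sum_congr rfl (fun s' (_ : s' ∈ Finset.univ) => mul_add (p s a s') (r s a) _),
          Finset.sum_add_distrib, ← Finset.sum_mul, hp1, one_mul]
    
end Aux3
section Aux4
variable {S A : Type*} [Fintype S] [Fintype A]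
variable (p : S → A → S → ℝ) (r : S → A → ℝ)

lemma Vpdis_T (π μ : ℕ → S → A → ℝ) (T : ℕ) (s : S) :
    Vpdis p r π μ T T s = 0 := by
  unfold Vpdis Epdis
  simp [Nat.sub_self, Etraj, pdisF]

lemma vval_T (π : ℕ → S → A → ℝ) (T : ℕ) (s : S) :
    vval p r π T T s = 0 := by
  unfold vval
  simp [Nat.sub_self, Etraj, retF]

lemma Vpdis_nonneg (hp0 : ∀ s a s', 0 ≤ p s a s') (hp1 : ∀ s a, ∑ s' : S, p s a s' = 1)
    (π μ : ℕ → S → A → ℝ) {T : ℕ} (hμ : IsPmf μ T) (t : ℕ) (ht : t ≤ T) (s : S) :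
    0 ≤ Vpdis p r π μ T t s := by
  unfold Vpdis Epdis
  have := Etraj_sq p hp0 hp1 μ hμ (T - t) t (by omega) s (pdisF r π μ t s)
  linarith

lemma Etraj_quad (hp1 : ∀ s a, ∑ s' : S, p s a s' = 1)
    (μ : ℕ → S → A → ℝ) {T : ℕ} (hμ : IsPmf μ T)
    (h t : ℕ) (ht : t + h ≤ T) (s : S) (c d : ℝ) (f : List (A × S) → ℝ) :
    Etraj p μ h t s (fun l => (c * (d + f l)) ^ 2)
      = c ^ 2 * ((d + Etraj p μ h t s f) ^ 2
          + (Etraj p μ h t s (fun l => f l ^ 2) - Etraj p μ h t s f ^ 2)) := by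
  have e : ∀ l, (c * (d + f l)) ^ 2
      = c ^ 2 * d ^ 2 + ((2 * c ^ 2 * d) * f l + c ^ 2 * f l ^ 2) := fun l => by ring
  simp only [e]
  rw [Etraj_add p μ h t s (fun _ => c ^ 2 * d ^ 2)
      (fun l => (2 * c ^ 2 * d) * f l + c ^ 2 * f l ^ 2),
    Etraj_add p μ h t s (fun l => (2 * c ^ 2 * d) * f l) (fun l => c ^ 2 * f l ^ 2),
    Etraj_smul p μ h t s (2 * c ^ 2 * d) f,
    Etraj_smul p μ h t s (c ^ 2) (fun l => f l ^ 2),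
    Etraj_const p hp1 μ hμ h t ht s (c ^ 2 * d ^ 2)]
  ring

lemma moment_rec (hp1 : ∀ s a, ∑ s' : S, p s a s' = 1)
    (π μ : ℕ → S → A → ℝ) {T : ℕ} (hπ : IsPmf π T) (hμ : IsPmf μ T)
    (hcancel : ∀ i (s : S) a, i < T → μ i s a * (π i s a / μ i s a) = π i s a)
    (t : ℕ) (ht : t < T) (s : S) :
    Etraj p μ (T - t) t s (fun l => pdisF r π μ t s l ^ 2)
      = ∑ a : A, μ t s a * (π t s a / μ t s a) ^ 2 *
          ∑ s' : S, p s a s' *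
            ((r s a + vval p r π T (t+1) s') ^ 2 + Vpdis p r π μ T (t+1) s') := by
  have hTt : T - t = (T - (t+1)) + 1 := by omega
  rw [hTt]
  simp only [Etraj]
  refine Finset.sum_congr rfl fun a _ => ?_
  have inner : ∀ s' : S,
      Etraj p μ (T - (t+1)) (t+1) s' (fun l => pdisF r π μ t s ((a, s') :: l) ^ 2)
        = (π t s a / μ t s a) ^ 2 *
            ((r s a + vval p r π T (t+1) s') ^ 2 + Vpdis p r π μ T (t+1) s') := by
    intro s'
    have hpd : ∀ l, pdisF r π μ t s ((a, s') :: l)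
        = π t s a / μ t s a * (r s a + pdisF r π μ (t+1) s' l) := fun l => rfl
    simp only [hpd]
    rw [Etraj_quad p hp1 μ hμ (T - (t+1)) (t+1) (by omega) s' (π t s a / μ t s a)
        (r s a) (pdisF r π μ (t+1) s')]
    have hmean : Etraj p μ (T - (t+1)) (t+1) s' (pdisF r π μ (t+1) s')
        = vval p r π T (t+1) s' :=
      Epdis_eq_vval p r hp1 π μ hπ hμ hcancel (t+1) (by omega) s'
    unfold Vpdis Epdis
    rw [hmean]
  calc ∑ s' : S, μ t s a * p s a s' *
        Etraj p μ (T - (t+1)) (t+1) s' (fun l => pdisF r π μ t s ((a, s') :: l) ^ 2)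
      = ∑ s' : S, μ t s a * p s a s' * ((π t s a / μ t s a) ^ 2 *
          ((r s a + vval p r π T (t+1) s') ^ 2 + Vpdis p r π μ T (t+1) s')) := by
        refine Finset.sum_congr rfl fun s' _ => ?_
        rw [inner s']
    _ = μ t s a * (π t s a / μ t s a) ^ 2 * ∑ s' : S, p s a s' *
          ((r s a + vval p r π T (t+1) s') ^ 2 + Vpdis p r π μ T (t+1) s') := by
        rw [Finset.mul_sum]
        refine Finset.sum_congr rfl fun s' _ => by ring

lemma split_sum (hp1 : ∀ s a, ∑ s' : S, p s a s' = 1)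
    (π : ℕ → S → A → ℝ) (T : ℕ) (t : ℕ) (ht : t < T) (s : S) (a : A) (X : S → ℝ) :
    ∑ s' : S, p s a s' * ((r s a + vval p r π T (t+1) s') ^ 2 + X s')
      = qval p r π T t s a ^ 2 + nuval p r π T t s a + ∑ s' : S, p s a s' * X s' := by
  have e : ∀ s' : S, p s a s' * ((r s a + vval p r π T (t+1) s') ^ 2 + X s')
      = (r s a) ^ 2 * p s a s' + ((2 * r s a) * (p s a s' * vval p r π T (t+1) s')
          + (p s a s' * vval p r π T (t+1) s' ^ 2 + p s a s' * X s')) := fun s' => by ring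
  simp only [e]
  rw [Finset.sum_add_distrib, Finset.sum_add_distrib, Finset.sum_add_distrib,
    ← Finset.mul_sum, ← Finset.mul_sum, hp1, mul_one]
  unfold qval nuval
  by_cases hT1 : t = T - 1
  · have ht1 : t + 1 = T := by omega
    rw [if_pos hT1]
    have hv : ∀ s' : S, vval p r π T (t+1) s' = 0 := by
      intro s'; rw [ht1]; exact vval_T p r π T s'
    simp only [hv]
    simp
  · rw [if_neg hT1]
    ring

lemma hq_eq (hp1 : ∀ s a, ∑ s' : S, p s a s' = 1)
    (π : ℕ → S → A → ℝ) (T : ℕ) (t : ℕ) (ht : t < T) (s : S) (a : A) :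
    hq p r π T t s a = qval p r π T t s a ^ 2 + nuval p r π T t s a
      + ∑ s' : S, p s a s' * Vpdis p r π π T (t+1) s' := by
  unfold hq
  by_cases hT1 : t = T - 1
  · have ht1 : t + 1 = T := by omega
    rw [if_pos hT1]
    have hV : ∀ s' : S, Vpdis p r π π T (t+1) s' = 0 := by
      intro s'; rw [ht1]; exact Vpdis_T p r π π T s'
    have hν : nuval p r π T t s a = 0 := by unfold nuval; rw [if_pos hT1]
    simp only [hV, hν]
    simp
  · rw [if_neg hT1]

end Aux4
section Aux5
variable {S A : Type*} [Fintype S] [Fintype A]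
variable (p : S → A → S → ℝ) (r : S → A → ℝ)

/-- general variance recursion -/
lemma Vpdis_rec (hp1 : ∀ s a, ∑ s' : S, p s a s' = 1)
    (π μ : ℕ → S → A → ℝ) {T : ℕ} (hπ : IsPmf π T) (hμ : IsPmf μ T)
    (hcancel : ∀ i (s : S) a, i < T → μ i s a * (π i s a / μ i s a) = π i s a)
    (t : ℕ) (ht : t < T) (s : S) :
    Vpdis p r π μ T t s
      = (∑ a : A, μ t s a * (π t s a / μ t s a) ^ 2 *
          (qval p r π T t s a ^ 2 + nuval p r π T t s a
            + ∑ s' : S, p s a s' * Vpdis p r π μ T (t+1) s'))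
        - vval p r π T t s ^ 2 := by
  rw [show Vpdis p r π μ T t s
      = Etraj p μ (T - t) t s (fun l => pdisF r π μ t s l ^ 2) - Epdis p r π μ T t s ^ 2
      from rfl,
    Epdis_eq_vval p r hp1 π μ hπ hμ hcancel t (by omega) s,
    moment_rec p r hp1 π μ hπ hμ hcancel t ht s]
  congr 1
  refine Finset.sum_congr rfl fun a _ => ?_
  rw [split_sum p r hp1 π T t ht s a (fun s' => Vpdis p r π μ T (t+1) s')]

lemma pi_rho_sq (x : ℝ) : x * (x / x) ^ 2 = x := by
  rcases eq_or_ne x 0 with h | h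
  · simp [h]
  · rw [div_self h]; ring

/-- on-policy variance formula -/
lemma Von_formula (hp1 : ∀ s a, ∑ s' : S, p s a s' = 1)
    (π : ℕ → S → A → ℝ) {T : ℕ} (hπ : IsPmf π T) (t : ℕ) (ht : t < T) (s : S) :
    Vpdis p r π π T t s
      = (∑ a : A, π t s a * hq p r π T t s a) - vval p r π T t s ^ 2 := by
  rw [Vpdis_rec p r hp1 π π hπ hπ (fun i s a _ => by
      rcases eq_or_ne (π i s a) 0 with h | h
      · simp [h]
      · rw [div_self h, mul_one]) t ht s]
  congr 1
  refine Finset.sum_congr rfl fun a _ => ?_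
  rw [hq_eq p r hp1 π T t ht s a, pi_rho_sq]

lemma nuval_nonneg (hp0 : ∀ s a s', 0 ≤ p s a s') (hp1 : ∀ s a, ∑ s' : S, p s a s' = 1)
    (π : ℕ → S → A → ℝ) (T t : ℕ) (s : S) (a : A) :
    0 ≤ nuval p r π T t s a := by
  unfold nuval
  by_cases hT1 : t = T - 1
  · rw [if_pos hT1]
  · rw [if_neg hT1]
    have cs := Finset.sum_mul_sq_le_sq_mul_sq Finset.univ
      (fun s' : S => Real.sqrt (p s a s'))
      (fun s' : S => Real.sqrt (p s a s') * vval p r π T (t+1) s')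
    have e1 : ∀ s' : S, Real.sqrt (p s a s') * (Real.sqrt (p s a s') * vval p r π T (t+1) s')
        = p s a s' * vval p r π T (t+1) s' := fun s' => by
      rw [← mul_assoc, Real.mul_self_sqrt (hp0 s a s')]
    have e2 : ∀ s' : S, Real.sqrt (p s a s') ^ 2 = p s a s' :=
      fun s' => Real.sq_sqrt (hp0 s a s')
    have e3 : ∀ s' : S, (Real.sqrt (p s a s') * vval p r π T (t+1) s') ^ 2
        = p s a s' * vval p r π T (t+1) s' ^ 2 := fun s' => by rw [mul_pow, e2]
    simp only [e1, e2, e3] at cs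
    rw [hp1, one_mul] at cs
    linarith

lemma hq_nonneg (hp0 : ∀ s a s', 0 ≤ p s a s') (hp1 : ∀ s a, ∑ s' : S, p s a s' = 1)
    (π : ℕ → S → A → ℝ) {T : ℕ} (hπ : IsPmf π T) (t : ℕ) (ht : t < T) (s : S) (a : A) :
    0 ≤ hq p r π T t s a := by
  rw [hq_eq p r hp1 π T t ht s a]
  have h1 := nuval_nonneg p r hp0 hp1 π T t s a
  have h2 : 0 ≤ ∑ s' : S, p s a s' * Vpdis p r π π T (t+1) s' :=
    Finset.sum_nonneg fun s' _ => mul_nonneg (hp0 s a s')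
      (Vpdis_nonneg p r hp0 hp1 π π hπ (t+1) (by omega) s')
  positivity

end Aux5
section Aux6
variable {S A : Type*} [Fintype S] [Fintype A]

lemma hmu_pmf [Nonempty A] (p : S → A → S → ℝ) (r : S → A → ℝ)
    (K : ℕ) (π : Fin K → ℕ → S → A → ℝ) (T : ℕ) :
    IsPmf (hmu p r K π T) T := by
  intro t s _
  constructor
  · intro a
    unfold hmu
    split
    · positivity
    · positivity
  · unfold hmu
    split
    · rw [Finset.sum_const, nsmul_eq_mul, Finset.card_univ,
        mul_inv_cancel₀ (by exact_mod_cast Fintype.card_ne_zero)]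
    · rw [← Finset.sum_div, div_self (by assumption)]

lemma abstract_key [Nonempty A] (w D : A → ℝ) (elo ehi Kr : ℝ)
    (hw : ∀ a, 0 ≤ w a) (hD : ∀ a, 0 < D a) (hKr : 0 < Kr) (hlo : 0 < elo)
    (hub : ∀ a, Kr * w a ≤ ehi * D a) (hlb : ∀ a, elo * D a ≤ Kr * w a) :
    ∑ a : A, w a / (Real.sqrt (D a) / (∑ b : A, Real.sqrt (D b)))
      ≤ Real.sqrt (ehi / elo) * (∑ a : A, Real.sqrt (w a)) ^ 2 := by
  set Z : ℝ := ∑ b : A, Real.sqrt (D b) with hZdef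
  have hZpos : 0 < Z := Finset.sum_pos
    (fun b _ => Real.sqrt_pos.2 (hD b)) Finset.univ_nonempty
  have hehi : 0 ≤ ehi := by
    obtain ⟨a0⟩ := ‹Nonempty A›
    nlinarith [hub a0, hD a0, hw a0]
  have hX : 0 ≤ ∑ a : A, Real.sqrt (w a) :=
    Finset.sum_nonneg fun a _ => Real.sqrt_nonneg _
  have step1 : ∀ a, w a / Real.sqrt (D a) ≤ Real.sqrt (w a) * Real.sqrt (ehi / Kr) := by
    intro a
    have h1 : w a / D a ≤ ehi / Kr := by
      rw [div_le_div_iff₀ (hD a) hKr]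
      nlinarith [hub a]
    have e : Real.sqrt (w a) * Real.sqrt (w a / D a) = w a / Real.sqrt (D a) := by
      rw [Real.sqrt_div (hw a), ← mul_div_assoc, Real.mul_self_sqrt (hw a)]
    rw [← e]
    exact mul_le_mul_of_nonneg_left (Real.sqrt_le_sqrt h1) (Real.sqrt_nonneg _)
  have step2 : Z ≤ Real.sqrt (Kr / elo) * ∑ a : A, Real.sqrt (w a) := by
    rw [Finset.mul_sum]
    refine Finset.sum_le_sum fun b _ => ?_
    have h1 : D b ≤ Kr / elo * w b := by
      rw [div_mul_eq_mul_div, le_div_iff₀ hlo]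
      nlinarith [hlb b]
    calc Real.sqrt (D b) ≤ Real.sqrt (Kr / elo * w b) := Real.sqrt_le_sqrt h1
      _ = Real.sqrt (Kr / elo) * Real.sqrt (w b) :=
          Real.sqrt_mul (by positivity) _
  have hmulsqrt : Real.sqrt (ehi / Kr) * Real.sqrt (Kr / elo) = Real.sqrt (ehi / elo) := by
    rw [← Real.sqrt_mul (by positivity)]
    congr 1
    rw [div_mul_div_comm, mul_comm ehi Kr, mul_div_mul_left _ _ (ne_of_gt hKr)]
  calc ∑ a : A, w a / (Real.sqrt (D a) / Z)
      = ∑ a : A, Z * (w a / Real.sqrt (D a)) := by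
        refine Finset.sum_congr rfl fun a _ => ?_
        rw [div_div_eq_mul_div, mul_comm (w a) Z, mul_div_assoc]
    _ ≤ ∑ a : A, Z * (Real.sqrt (w a) * Real.sqrt (ehi / Kr)) := by
        refine Finset.sum_le_sum fun a _ => ?_
        exact mul_le_mul_of_nonneg_left (step1 a) hZpos.le
    _ = Z * Real.sqrt (ehi / Kr) * ∑ a : A, Real.sqrt (w a) := by
        rw [Finset.mul_sum]
        refine Finset.sum_congr rfl fun a _ => by ring
    _ ≤ (Real.sqrt (Kr / elo) * ∑ a : A, Real.sqrt (w a)) * Real.sqrt (ehi / Kr)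
          * ∑ a : A, Real.sqrt (w a) := by
        have h2 : Z * Real.sqrt (ehi / Kr)
            ≤ (Real.sqrt (Kr / elo) * ∑ a : A, Real.sqrt (w a)) * Real.sqrt (ehi / Kr) :=
          mul_le_mul_of_nonneg_right step2 (Real.sqrt_nonneg _)
        exact mul_le_mul_of_nonneg_right h2 hX
    _ = Real.sqrt (ehi / elo) * (∑ a : A, Real.sqrt (w a)) ^ 2 := by
        rw [← hmulsqrt]; ring

lemma keyineq [Nonempty S] [Nonempty A] (p : S → A → S → ℝ) (r : S → A → ℝ)
    (hp0 : ∀ s a s', 0 ≤ p s a s') (hp1 : ∀ s a, ∑ s' : S, p s a s' = 1)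
    (K : ℕ) (hK : 0 < K) (π : Fin K → ℕ → S → A → ℝ) (T : ℕ)
    (hπ : ∀ k, IsPmf (π k) T) (t : ℕ) (ht : t < T)
    (hwbar : ∀ (s : S) (a : A), 0 < (∑ j : Fin K, wRL p r K π T j t s a) / K)
    (hlo : 0 < etaLoRL p r K π T t)
    (k : Fin K) (s : S) :
    ∑ a : A, hmu p r K π T t s a * (π k t s a / hmu p r K π T t s a) ^ 2
        * hq p r (π k) T t s a
      ≤ Real.sqrt (etaHiRL p r K π T t / etaLoRL p r K π T t) *
          (∑ a : A, π k t s a * Real.sqrt (hq p r (π k) T t s a)) ^ 2 := by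
  haveI : Nonempty (Fin K) := ⟨⟨0, hK⟩⟩
  set w : A → ℝ := fun a => π k t s a ^ 2 * hq p r (π k) T t s a with hwdef
  set D : A → ℝ := fun a => ∑ j : Fin K, π j t s a ^ 2 * hq p r (π j) T t s a with hDdef
  have hDw : ∀ a, D a = ∑ j : Fin K, wRL p r K π T j t s a := by
    intro a; simp only [hDdef, wRL]
  have hD : ∀ a, 0 < D a := by
    intro a
    have := hwbar s a
    rw [← hDw] at this
    have hKpos : (0:ℝ) < K := by exact_mod_cast hK
    calc (0:ℝ) < D a / K * K := by positivity
      _ = D a := by field_simp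
  have hw : ∀ a, 0 ≤ w a := fun a =>
    mul_nonneg (sq_nonneg _) (hq_nonneg p r hp0 hp1 (π k) (hπ k) t ht s a)
  have hZpos : 0 < ∑ b : A, Real.sqrt (D b) :=
    Finset.sum_pos (fun b _ => Real.sqrt_pos.2 (hD b)) Finset.univ_nonempty
  have hμa : ∀ a, hmu p r K π T t s a = Real.sqrt (D a) / ∑ b : A, Real.sqrt (D b) := by
    intro a
    unfold hmu
    rw [if_neg (ne_of_gt hZpos)]
  have hμpos : ∀ a, 0 < hmu p r K π T t s a := by
    intro a; rw [hμa a]; exact div_pos (Real.sqrt_pos.2 (hD a)) hZpos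
  -- eta bounds
  have hDK : ∀ a, 0 < (∑ j : Fin K, wRL p r K π T j t s a) / K := fun a => hwbar s a
  have hub : ∀ a, (K:ℝ) * w a ≤ etaHiRL p r K π T t * D a := by
    intro a
    have h1 : etaRL p r K π T k t s a ≤ etaHiRL p r K π T t := by
      have := le_ciSup (f := fun x : Fin K × S × A => etaRL p r K π T x.1 t x.2.1 x.2.2)
        (Finite.bddAbove_range _) (k, s, a)
      exact this
    unfold etaRL at h1
    have h2 : wRL p r K π T k t s a
        ≤ etaHiRL p r K π T t * ((∑ j : Fin K, wRL p r K π T j t s a) / K) :=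
      (div_le_iff₀ (hDK a)).1 h1
    have h3 : wRL p r K π T k t s a = w a := by simp only [wRL, hwdef]
    rw [h3, ← hDw a] at h2
    have hKpos : (0:ℝ) < K := by exact_mod_cast hK
    calc (K:ℝ) * w a ≤ (K:ℝ) * (etaHiRL p r K π T t * (D a / K)) :=
          mul_le_mul_of_nonneg_left h2 hKpos.le
      _ = etaHiRL p r K π T t * D a := by field_simp
  have hlb : ∀ a, etaLoRL p r K π T t * D a ≤ (K:ℝ) * w a := by
    intro a
    have h1 : etaLoRL p r K π T t ≤ etaRL p r K π T k t s a := by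
      have := ciInf_le (f := fun x : Fin K × S × A => etaRL p r K π T x.1 t x.2.1 x.2.2)
        (Finite.bddBelow_range _) (k, s, a)
      exact this
    unfold etaRL at h1
    have h2 : etaLoRL p r K π T t * ((∑ j : Fin K, wRL p r K π T j t s a) / K)
        ≤ wRL p r K π T k t s a := (le_div_iff₀ (hDK a)).1 h1
    have h3 : wRL p r K π T k t s a = w a := by simp only [wRL, hwdef]
    rw [h3, ← hDw a] at h2
    have hKpos : (0:ℝ) < K := by exact_mod_cast hK
    calc etaLoRL p r K π T t * D a
        = (K:ℝ) * (etaLoRL p r K π T t * (D a / K)) := by field_simp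
      _ ≤ (K:ℝ) * w a := mul_le_mul_of_nonneg_left h2 hKpos.le
  have hKpos : (0:ℝ) < (K:ℝ) := by exact_mod_cast hK
  have main := abstract_key w D (etaLoRL p r K π T t) (etaHiRL p r K π T t) (K:ℝ)
    hw hD hKpos hlo hub hlb
  have lhs_eq : ∑ a : A, hmu p r K π T t s a * (π k t s a / hmu p r K π T t s a) ^ 2
        * hq p r (π k) T t s a
      = ∑ a : A, w a / (Real.sqrt (D a) / ∑ b : A, Real.sqrt (D b)) := by
    refine Finset.sum_congr rfl fun a _ => ?_
    rw [← hμa a]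
    have hne := ne_of_gt (hμpos a)
    field_simp
    ring
  have rhs_eq : ∑ a : A, Real.sqrt (w a)
      = ∑ a : A, π k t s a * Real.sqrt (hq p r (π k) T t s a) := by
    refine Finset.sum_congr rfl fun a _ => ?_
    simp only [hwdef]
    rw [Real.sqrt_mul (sq_nonneg _), Real.sqrt_sq ((hπ k t s ht).1 a)]
  rw [lhs_eq]
  rw [rhs_eq] at main
  exact main

end Aux6
section Aux7
variable {S A : Type*} [Fintype S] [Fintype A]

lemma hmu_pos [Nonempty A] (p : S → A → S → ℝ) (r : S → A → ℝ)
    (K : ℕ) (hK : 0 < K) (π : Fin K → ℕ → S → A → ℝ) (T t : ℕ) (s : S)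
    (hwb : ∀ a : A, 0 < (∑ j : Fin K, wRL p r K π T j t s a) / (K:ℝ)) (a : A) :
    0 < hmu p r K π T t s a := by
  have hKpos : (0:ℝ) < (K:ℝ) := by exact_mod_cast hK
  have hD : ∀ b : A, 0 < ∑ kk : Fin K, π kk t s b ^ 2 * hq p r (π kk) T t s b := by
    intro b
    have h1 := mul_pos (hwb b) hKpos
    rw [div_mul_cancel₀ _ (ne_of_gt hKpos)] at h1
    simpa only [wRL] using h1
  have hZ : 0 < ∑ b : A, Real.sqrt (∑ kk : Fin K, π kk t s b ^ 2 * hq p r (π kk) T t s b) :=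
    Finset.sum_pos (fun b _ => Real.sqrt_pos.2 (hD b)) Finset.univ_nonempty
  unfold hmu
  rw [if_neg (ne_of_gt hZ)]
  exact div_pos (Real.sqrt_pos.2 (hD a)) hZ

lemma Delta_eq (p : S → A → S → ℝ) (r : S → A → ℝ)
    (K : ℕ) (π : Fin K → ℕ → S → A → ℝ) (T : ℕ) (k : Fin K) (t : ℕ) (s : S)
    (hμpos : ∀ a : A, 0 < hmu p r K π T t s a) :
    DeltaRL p r K π T k t s
      = (∑ a : A, hmu p r K π T t s a * (π k t s a / hmu p r K π T t s a) ^ 2 *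
          (qval p r (π k) T t s a ^ 2 + nuval p r (π k) T t s a))
        - (∑ a : A, π k t s a * qval p r (π k) T t s a) ^ 2 := by
  unfold DeltaRL
  have e3 : ∀ a : A, hmu p r K π T t s a *
      (π k t s a / hmu p r K π T t s a * qval p r (π k) T t s a)
      = π k t s a * qval p r (π k) T t s a := by
    intro a
    have hne := ne_of_gt (hμpos a)
    field_simp
  simp only [e3]
  have e4 : ∀ a : A, hmu p r K π T t s a * (π k t s a / hmu p r K π T t s a) ^ 2 *
      (qval p r (π k) T t s a ^ 2 + nuval p r (π k) T t s a)
      = hmu p r K π T t s a * ((π k t s a / hmu p r K π T t s a) ^ 2 *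
          nuval p r (π k) T t s a)
        + hmu p r K π T t s a *
            (π k t s a / hmu p r K π T t s a * qval p r (π k) T t s a) ^ 2 := by
    intro a; ring
  simp only [e4]
  rw [Finset.sum_add_distrib]
  ring

lemma sum_mul_add {X c d : A → ℝ} :
    ∑ a : A, X a * (c a + d a) = (∑ a : A, X a * c a) + ∑ a : A, X a * d a := by
  rw [← Finset.sum_add_distrib]
  exact Finset.sum_congr rfl fun a _ => by ring

lemma step_lemma [Nonempty S] [Nonempty A]
    (p : S → A → S → ℝ) (r : S → A → ℝ)
    (hp0 : ∀ s a s', 0 ≤ p s a s') (hp1 : ∀ s a, ∑ s' : S, p s a s' = 1)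
    (T : ℕ) (K : ℕ) (hK : 0 < K) (π : Fin K → ℕ → S → A → ℝ)
    (hπ : ∀ k, IsPmf (π k) T)
    (hwbar : ∀ t, t < T → ∀ (s : S) (a : A),
      0 < (∑ j : Fin K, wRL p r K π T j t s a) / K)
    (hlo : ∀ t, t < T → 0 < etaLoRL p r K π T t)
    (k : Fin K) (t : ℕ) (ht : t < T) (s : S)
    (Nk N : ℝ) (hNk : 0 < Nk) (hNkN : Nk ≤ N)
    (hcond1 : Real.sqrt (etaHiRL p r K π T t / etaLoRL p r K π T t) *
          (∑ a : A, π k t s a * Real.sqrt (hq p r (π k) T t s a)) ^ 2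
        - (1 - Nk / N) * DeltaRL p r K π T k t s
        ≤ ∑ a : A, π k t s a * hq p r (π k) T t s a)
    (hIH : ∀ s' : S, Nk * Vpdis p r (π k) (hmu p r K π T) T (t+1) s'
        ≤ N * Vpdis p r (π k) (π k) T (t+1) s') :
    Nk * Vpdis p r (π k) (hmu p r K π T) T t s
      ≤ N * Vpdis p r (π k) (π k) T t s := by
  have hN : 0 < N := lt_of_lt_of_le hNk hNkN
  have hμP : IsPmf (hmu p r K π T) T := hmu_pmf p r K π T
  have hμpos : ∀ i, i < T → ∀ (s' : S) (a : A), 0 < hmu p r K π T i s' a :=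
    fun i hi s' a => hmu_pos p r K hK π T i s' (fun b => hwbar i hi s' b) a
  have hcancel : ∀ i (s' : S) a, i < T →
      hmu p r K π T i s' a * (π k i s' a / hmu p r K π T i s' a) = π k i s' a := by
    intro i s' a hi
    have hne := ne_of_gt (hμpos i hi s' a)
    field_simp
  -- abbreviations
  set μ := hmu p r K π T with hμdef
  set ρ2 : A → ℝ := fun a => μ t s a * (π k t s a / μ t s a) ^ 2 with hρ2def
  have hρ2nn : ∀ a, 0 ≤ ρ2 a := fun a =>
    mul_nonneg (le_of_lt (hμpos t ht s a)) (sq_nonneg _)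
  set B : ℝ := ∑ a : A, ρ2 a * (qval p r (π k) T t s a ^ 2 + nuval p r (π k) T t s a)
    with hBdef
  set TailOff : ℝ := ∑ a : A, ρ2 a * ∑ s' : S, p s a s' * Vpdis p r (π k) μ T (t+1) s'
    with hToffdef
  set TailOn : ℝ := ∑ a : A, ρ2 a * ∑ s' : S, p s a s' * Vpdis p r (π k) (π k) T (t+1) s'
    with hTondef
  set Shq : ℝ := ∑ a : A, ρ2 a * hq p r (π k) T t s a with hShqdef
  set Spi : ℝ := ∑ a : A, π k t s a * hq p r (π k) T t s a with hSpidef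
  set Vbar : ℝ := ∑ a : A, π k t s a * qval p r (π k) T t s a with hVbardef
  set SR : ℝ := Real.sqrt (etaHiRL p r K π T t / etaLoRL p r K π T t) *
    (∑ a : A, π k t s a * Real.sqrt (hq p r (π k) T t s a)) ^ 2 with hSRdef
  -- recursion for the off-policy variance
  have hVoff : Vpdis p r (π k) μ T t s = B + TailOff - Vbar ^ 2 := by
    rw [Vpdis_rec p r hp1 (π k) μ (hπ k) hμP hcancel t ht s,
      vval_eq_sum_q p r hp1 (π k) (hπ k) t ht s]
    have : ∀ a : A, ρ2 a * ((qval p r (π k) T t s a ^ 2 + nuval p r (π k) T t s a)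
          + ∑ s' : S, p s a s' * Vpdis p r (π k) μ T (t+1) s')
        = ρ2 a * (qval p r (π k) T t s a ^ 2 + nuval p r (π k) T t s a)
          + ρ2 a * ∑ s' : S, p s a s' * Vpdis p r (π k) μ T (t+1) s' := fun a => by ring
    have e : ∑ a : A, μ t s a * (π k t s a / μ t s a) ^ 2 *
          (qval p r (π k) T t s a ^ 2 + nuval p r (π k) T t s a
            + ∑ s' : S, p s a s' * Vpdis p r (π k) μ T (t+1) s')
        = B + TailOff := by
      rw [hBdef, hToffdef, ← Finset.sum_add_distrib]
      refine Finset.sum_congr rfl fun a _ => by rw [hρ2def]; ring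
    rw [e]
  -- on-policy variance
  have hVon : Vpdis p r (π k) (π k) T t s = Spi - Vbar ^ 2 := by
    rw [Von_formula p r hp1 (π k) (hπ k) t ht s,
      vval_eq_sum_q p r hp1 (π k) (hπ k) t ht s]
  -- hq decomposition
  have hF3 : Shq = B + TailOn := by
    rw [hShqdef, hBdef, hTondef, ← Finset.sum_add_distrib]
    refine Finset.sum_congr rfl fun a _ => ?_
    rw [hq_eq p r hp1 (π k) T t ht s a]
    ring
  -- Delta identity
  have hΔ : DeltaRL p r K π T k t s = B - Vbar ^ 2 := by
    rw [Delta_eq p r K π T k t s (fun a => hμpos t ht s a)]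
  -- tail comparison
  have htail : Nk * TailOff ≤ N * TailOn := by
    rw [hToffdef, hTondef, Finset.mul_sum, Finset.mul_sum]
    refine Finset.sum_le_sum fun a _ => ?_
    have inner : Nk * ∑ s' : S, p s a s' * Vpdis p r (π k) μ T (t+1) s'
        ≤ N * ∑ s' : S, p s a s' * Vpdis p r (π k) (π k) T (t+1) s' := by
      rw [Finset.mul_sum, Finset.mul_sum]
      refine Finset.sum_le_sum fun s' _ => ?_
      have h1 := hIH s'
      have h2 : p s a s' * (Nk * Vpdis p r (π k) μ T (t+1) s')
          ≤ p s a s' * (N * Vpdis p r (π k) (π k) T (t+1) s') :=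
        mul_le_mul_of_nonneg_left h1 (hp0 s a s')
      calc Nk * (p s a s' * Vpdis p r (π k) μ T (t+1) s')
          = p s a s' * (Nk * Vpdis p r (π k) μ T (t+1) s') := by ring
        _ ≤ p s a s' * (N * Vpdis p r (π k) (π k) T (t+1) s') := h2
        _ = N * (p s a s' * Vpdis p r (π k) (π k) T (t+1) s') := by ring
    calc Nk * (ρ2 a * ∑ s' : S, p s a s' * Vpdis p r (π k) μ T (t+1) s')
        = ρ2 a * (Nk * ∑ s' : S, p s a s' * Vpdis p r (π k) μ T (t+1) s') := by ring
      _ ≤ ρ2 a * (N * ∑ s' : S, p s a s' * Vpdis p r (π k) (π k) T (t+1) s') :=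
          mul_le_mul_of_nonneg_left inner (hρ2nn a)
      _ = N * (ρ2 a * ∑ s' : S, p s a s' * Vpdis p r (π k) (π k) T (t+1) s') := by ring
  -- key inequality
  have hkey : Shq ≤ SR :=
    keyineq p r hp0 hp1 K hK π T hπ t ht (fun s' a => hwbar t ht s' a) (hlo t ht) k s
  -- scaled similarity condition
  have hcnd : N * SR - (N - Nk) * DeltaRL p r K π T k t s ≤ N * Spi := by
    have h1 := mul_le_mul_of_nonneg_left hcond1 hN.le
    have h2 : N * (SR - (1 - Nk / N) * DeltaRL p r K π T k t s)
        = N * SR - (N - Nk) * DeltaRL p r K π T k t s := by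
      field_simp
    rw [h2] at h1
    exact h1
  -- final linear arithmetic
  have e1 : Nk * Vpdis p r (π k) μ T t s = Nk * B + Nk * TailOff - Nk * Vbar ^ 2 := by
    rw [hVoff]; ring
  have e2 : N * Vpdis p r (π k) (π k) T t s = N * Spi - N * Vbar ^ 2 := by
    rw [hVon]; ring
  have e3 : N * TailOn = N * Shq - N * B := by rw [hF3]; ring
  have e5 : N * Shq ≤ N * SR := mul_le_mul_of_nonneg_left hkey hN.le
  have e7 : (N - Nk) * DeltaRL p r K π T k t s
      = N * B - Nk * B - N * Vbar ^ 2 + Nk * Vbar ^ 2 := by rw [hΔ]; ring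
  linarith

end Aux7

/-- variance reduction with the same total sample size (RL setting): under the
similarity condition, for every `k`, `t ∈ {0,…,T-1}` and state `s`,
`V(E^{off,π^(k)}_{t:T-1} | S_t = s) ≤ V(E^{on,π^(k)}_{t:T-1} | S_t = s)`, i.e.
`(1/n) V(G^PDIS_k(τ^{ĥμ_{t:T-1}}) | S_t = s) ≤ (1/n_k) V(G^PDIS_k(τ^{π^(k)_{t:T-1}}) | S_t = s)`. -/
theorem stmt13 {S A : Type*} [Fintype S] [Fintype A] [Nonempty S] [Nonempty A]
    (p : S → A → S → ℝ) (r : S → A → ℝ)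
    (hp0 : ∀ s a s', 0 ≤ p s a s') (hp1 : ∀ s a, ∑ s' : S, p s a s' = 1)
    (T : ℕ) (hT : 1 ≤ T)
    (K : ℕ) (hK : 0 < K) (π : Fin K → ℕ → S → A → ℝ)
    (hπ : ∀ k t s, t < T → (∀ a, 0 ≤ π k t s a) ∧ (∑ a : A, π k t s a = 1))
    (hwbar : ∀ t, t < T → ∀ (s : S) (a : A),
      0 < (∑ j : Fin K, wRL p r K π T j t s a) / K)
    (hlo : ∀ t, t < T → 0 < etaLoRL p r K π T t)
    (nk : Fin K → ℕ) (hnk : ∀ k, 0 < nk k) (n : ℕ) (hn : n = ∑ k : Fin K, nk k)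
    (hcond : ∀ (k : Fin K) (t : ℕ), t < T → ∀ s : S,
      Real.sqrt (etaHiRL p r K π T t / etaLoRL p r K π T t) *
          (∑ a : A, π k t s a * Real.sqrt (hq p r (π k) T t s a)) ^ 2
        - (1 - (nk k : ℝ) / (n : ℝ)) * DeltaRL p r K π T k t s
        ≤ ∑ a : A, π k t s a * hq p r (π k) T t s a) :
    ∀ (k : Fin K) (t : ℕ), t < T → ∀ s : S,
      (1 / (n : ℝ)) * Vpdis p r (π k) (hmu p r K π T) T t s
        ≤ (1 / (nk k : ℝ)) * Vpdis p r (π k) (π k) T t s := by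
  have hπP : ∀ kk, IsPmf (π kk) T := fun kk i s hi => hπ kk i s hi
  intro k t ht s
  have hNk : (0:ℝ) < (nk k : ℝ) := by exact_mod_cast hnk k
  have hNkN : ((nk k : ℕ) : ℝ) ≤ (n : ℝ) := by
    have : nk k ≤ n := by
      subst hn
      exact Finset.single_le_sum (f := fun j => nk j) (fun j _ => Nat.zero_le _)
        (Finset.mem_univ k)
    exact_mod_cast this
  have hNpos : (0:ℝ) < (n : ℝ) := lt_of_lt_of_le hNk hNkN
  have H : ∀ h : ℕ, ∀ t', t' + h + 1 = T → ∀ s' : S,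
      (nk k : ℝ) * Vpdis p r (π k) (hmu p r K π T) T t' s'
        ≤ (n : ℝ) * Vpdis p r (π k) (π k) T t' s' := by
    intro h
    induction h with
    | zero =>
        intro t' hTt s'
        refine step_lemma p r hp0 hp1 T K hK π hπP hwbar hlo k t' (by omega) s'
          (nk k : ℝ) (n : ℝ) hNk hNkN (hcond k t' (by omega) s') ?_
        intro s''
        have h1 : t' + 1 = T := by omega
        rw [h1, Vpdis_T, Vpdis_T]
        simp
    | succ h ih =>
        intro t' hTt s'
        exact step_lemma p r hp0 hp1 T K hK π hπP hwbar hlo k t' (by omega) s'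
          (nk k : ℝ) (n : ℝ) hNk hNkN (hcond k t' (by omega) s')
          (fun s'' => ih (t'+1) (by omega) s'')
  have key := H (T - t - 1) t (by omega) s
  rw [div_mul_eq_mul_div, one_mul, div_mul_eq_mul_div, one_mul,
    div_le_div_iff₀ hNpos hNk]
  calc Vpdis p r (π k) (hmu p r K π T) T t s * (nk k : ℝ)
      = (nk k : ℝ) * Vpdis p r (π k) (hmu p r K π T) T t s := mul_comm _ _
    _ ≤ (n : ℝ) * Vpdis p r (π k) (π k) T t s := key
    _ = Vpdis p r (π k) (π k) T t s * (n : ℝ) := mul_comm _ _
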